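/- Let J be a simple Euclidean Jordan algebra and c an idempotent of J. Then the Peirce subalgebra J(c,1) is a simple Jordan algebra. -/

import Mathlib

open scoped RealInnerProductSpace

/-- A Euclidean Jordan algebra structure on a finite-dimensional real inner
product space: a commutative bilinear product satisfying the Jordan identity,
with unit `one`, such that the inner product is associative. -/
structure EJA (J : Type) [NormedAddCommGroup J] [InnerProductSpace ℝ J] : Type where
  mul : J →ₗ[ℝ] J →ₗ[ℝ] J
  comm : ∀ x y : J, mul x y = mul y x
  jordan : ∀ x y : J, mul (mul x y) (mul x x) = mul x (mul y (mul x x))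
  one : J
  one_mul : ∀ x : J, mul one x = x
  assoc_inner : ∀ x y z : J, ⟪mul x y, z⟫ = ⟪y, mul x z⟫

variable {J : Type} [NormedAddCommGroup J] [InnerProductSpace ℝ J] [FiniteDimensional ℝ J]

/-- The Peirce `μ`-eigenspace of the idempotent `c`. -/
noncomputable def EJA.peirce (A : EJA J) (c : J) (μ : ℝ) : Submodule ℝ J :=
  Module.End.eigenspace (A.mul c : Module.End ℝ J) μ

/-- A complete system of orthogonal idempotents. -/
def EJA.IsCSOI (A : EJA J) {k : ℕ} (c : Fin k → J) : Prop :=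
  (∀ j, A.mul (c j) (c j) = c j) ∧ (∀ i j, i ≠ j → A.mul (c i) (c j) = 0) ∧
    (∑ j, c j) = A.one

/-- `y` is the Jordan inverse of `x`:  `x∘y = e` and `x²∘y = x`. -/
def EJA.IsInv (A : EJA J) (x y : J) : Prop :=
  A.mul x y = A.one ∧ A.mul (A.mul x x) y = x

/-- An ideal of the Jordan algebra `J`. -/
def EJA.IsIdeal (A : EJA J) (I : Submodule ℝ J) : Prop :=
  ∀ x : J, ∀ a ∈ I, A.mul x a ∈ I

/-- `J` is a simple Jordan algebra: nonzero and with no nontrivial ideal. -/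
def EJA.IsSimple (A : EJA J) : Prop :=
  (∃ x : J, x ≠ 0) ∧ ∀ I : Submodule ℝ J, A.IsIdeal I → I = ⊥ ∨ I = ⊤

set_option linter.unusedSectionVars false

lemma EJA.lin1 (A : EJA J) (x z w : J) :
    A.mul (A.mul x w) (A.mul x z) + A.mul (A.mul x w) (A.mul z x)
      + A.mul (A.mul z w) (A.mul x x)
    = A.mul x (A.mul w (A.mul x z)) + A.mul x (A.mul w (A.mul z x))
      + A.mul z (A.mul w (A.mul x x)) := by
  have h1 := A.jordan (x + z) w
  have h2 := A.jordan (x - z) w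
  have h0' := A.jordan z w
  simp only [map_add, map_sub, LinearMap.add_apply, LinearMap.sub_apply] at h1 h2
  linear_combination (norm := module) (1/2:ℝ) • h1 - (1/2:ℝ) • h2 - h0'

lemma EJA.lin2 (A : EJA J) (x u z w : J) :
    A.mul (A.mul x w) (A.mul u z) + A.mul (A.mul u w) (A.mul x z)
      + A.mul (A.mul x w) (A.mul z u) + A.mul (A.mul u w) (A.mul z x)
      + A.mul (A.mul z w) (A.mul x u) + A.mul (A.mul z w) (A.mul u x)
    = A.mul x (A.mul w (A.mul u z)) + A.mul u (A.mul w (A.mul x z))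
      + A.mul x (A.mul w (A.mul z u)) + A.mul u (A.mul w (A.mul z x))
      + A.mul z (A.mul w (A.mul x u)) + A.mul z (A.mul w (A.mul u x)) := by
  have h1 := A.lin1 (x + u) z w
  have h2 := A.lin1 x z w
  have h3 := A.lin1 u z w
  simp only [map_add, LinearMap.add_apply] at h1
  linear_combination (norm := module) h1 - h2 - h3

lemma EJA.mul_one' (A : EJA J) (x : J) : A.mul x A.one = x := by
  rw [A.comm]; exact A.one_mul x

/-- commutation: if `e∘a = a` then `L e` and `L a` commute -/
lemma EJA.comm1 (A : EJA J) {e a : J} (he : A.mul e e = e) (ha : A.mul e a = a)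
    (w : J) : A.mul e (A.mul a w) = A.mul a (A.mul e w) := by
  have h := A.lin1 e a w
  rw [A.comm a e] at h
  rw [ha, he] at h
  rw [A.comm w a, A.comm w e, A.comm (A.mul e w) a, A.comm (A.mul a w) e] at h
  linear_combination (norm := module) -h

/-- commutation: if `e∘a = 0` then `L e` and `L a` commute -/
lemma EJA.comm0 (A : EJA J) {e a : J} (he : A.mul e e = e) (ha : A.mul e a = 0)
    (w : J) : A.mul e (A.mul a w) = A.mul a (A.mul e w) := by
  have h := A.lin1 e a w
  rw [A.comm a e] at h
  rw [ha, he] at h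
  rw [A.comm w e, A.comm (A.mul a w) e] at h
  simp only [map_zero, LinearMap.zero_apply, zero_add, add_zero] at h
  exact h

/-- the cubic identity for an idempotent: `2L³ + L = 3L²`. -/
lemma EJA.cubic (A : EJA J) {e : J} (he : A.mul e e = e) (w : J) :
    (2:ℝ) • A.mul e (A.mul e (A.mul e w)) + A.mul e w
      = (3:ℝ) • A.mul e (A.mul e w) := by
  have h := A.lin1 e w e
  simp only [he] at h
  rw [A.comm w e] at h
  rw [A.comm (A.mul e w) e] at h
  linear_combination (norm := module) -h

lemma EJA.mem_peirce (A : EJA J) {e x : J} {μ : ℝ} :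
    x ∈ A.peirce e μ ↔ A.mul e x = μ • x := Module.End.mem_eigenspace_iff

lemma EJA.p11 (A : EJA J) {e a b : J} (he : A.mul e e = e) (ha : A.mul e a = a)
    (hb : A.mul e b = b) : A.mul e (A.mul a b) = A.mul a b := by
  rw [A.comm1 he ha, hb]

lemma EJA.p1h (A : EJA J) {e a b : J} (he : A.mul e e = e) (ha : A.mul e a = a)
    (hb : A.mul e b = (1/2:ℝ) • b) :
    A.mul e (A.mul a b) = (1/2:ℝ) • A.mul a b := by
  rw [A.comm1 he ha, hb, map_smul]

lemma EJA.p10 (A : EJA J) {e a b : J} (he : A.mul e e = e) (ha : A.mul e a = a)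
    (hb : A.mul e b = 0) : A.mul a b = 0 := by
  have h1 : A.mul e (A.mul a b) = 0 := by rw [A.comm1 he ha, hb, map_zero]
  have h2 := A.comm0 he hb a
  rw [ha, A.comm b a] at h2
  rw [h1] at h2
  exact h2.symm

lemma EJA.p00 (A : EJA J) {e a b : J} (he : A.mul e e = e) (ha : A.mul e a = 0)
    (hb : A.mul e b = 0) : A.mul e (A.mul a b) = 0 := by
  rw [A.comm0 he ha, hb, map_zero]

lemma EJA.p0h (A : EJA J) {e a b : J} (he : A.mul e e = e) (ha : A.mul e a = 0)
    (hb : A.mul e b = (1/2:ℝ) • b) :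
    A.mul e (A.mul a b) = (1/2:ℝ) • A.mul a b := by
  rw [A.comm0 he ha, hb, map_smul]

lemma EJA.phh (A : EJA J) {e a b : J} (he : A.mul e e = e)
    (ha : A.mul e a = (1/2:ℝ) • a) (hb : A.mul e b = (1/2:ℝ) • b) :
    A.mul e (A.mul e (A.mul a b)) = A.mul e (A.mul a b) := by
  have h := A.lin2 a b e e
  rw [A.comm a e, A.comm b e, A.comm b a] at h
  simp only [he, ha, hb, map_smul, LinearMap.smul_apply] at h
  linear_combination (norm := module) (-1/2:ℝ) • h

lemma EJA.m7 (A : EJA J) {e x0 a b : J} (he : A.mul e e = e)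
    (hx : A.mul e x0 = 0) (ha : A.mul e a = (1/2:ℝ) • a)
    (hb : A.mul e b = (1/2:ℝ) • b) :
    A.mul x0 (A.mul a b) = A.mul a (A.mul x0 b) + A.mul (A.mul x0 a) b
      - (2:ℝ) • A.mul e (A.mul (A.mul x0 a) b) := by
  have h := A.lin2 x0 (A.one - e) a b
  simp only [map_sub, LinearMap.sub_apply, A.one_mul, A.mul_one'] at h
  rw [A.comm x0 e, A.comm a e] at h
  simp only [ha, hb, hx, map_zero, sub_zero, map_smul, LinearMap.smul_apply, smul_sub] at h
  rw [A.comm b a, A.comm a x0, A.comm b x0, A.comm (A.mul x0 b) a,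
    A.comm b (A.mul x0 a), A.comm (A.mul a b) x0] at h
  linear_combination (norm := module) h

lemma EJA.decomp_sum (A : EJA J) (e x : J) :
    ((2:ℝ) • A.mul e (A.mul e x) - A.mul e x)
      + ((4:ℝ) • A.mul e x - (4:ℝ) • A.mul e (A.mul e x))
      + (x - (3:ℝ) • A.mul e x + (2:ℝ) • A.mul e (A.mul e x)) = x := by
  module

lemma EJA.part1 (A : EJA J) {e : J} (he : A.mul e e = e) (x : J) :
    A.mul e ((2:ℝ) • A.mul e (A.mul e x) - A.mul e x)
      = (2:ℝ) • A.mul e (A.mul e x) - A.mul e x := by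
  have h := A.cubic he x
  simp only [map_smul, map_sub]
  linear_combination (norm := module) h

lemma EJA.parth (A : EJA J) {e : J} (he : A.mul e e = e) (x : J) :
    A.mul e ((4:ℝ) • A.mul e x - (4:ℝ) • A.mul e (A.mul e x))
      = (1/2:ℝ) • ((4:ℝ) • A.mul e x - (4:ℝ) • A.mul e (A.mul e x)) := by
  have h := A.cubic he x
  simp only [map_smul, map_sub]
  linear_combination (norm := module) (-2:ℝ) • h

lemma EJA.part0 (A : EJA J) {e : J} (he : A.mul e e = e) (x : J) :
    A.mul e (x - (3:ℝ) • A.mul e x + (2:ℝ) • A.mul e (A.mul e x)) = 0 := by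
  have h := A.cubic he x
  simp only [map_smul, map_sub, map_add]
  linear_combination (norm := module) h


/-- If `J` is a simple Euclidean Jordan algebra and `c` a nonzero idempotent,
then the Peirce subalgebra `J(c,1)` is a simple Jordan algebra: it is nonzero
and its only ideals are `⊥` and `J(c,1)`. -/
theorem stmt8 (A : EJA J) (hA : A.IsSimple) (c : J) (hc : A.mul c c = c)
    (hc0 : c ≠ 0) :
    (∃ x ∈ A.peirce c 1, x ≠ 0) ∧
    ∀ I : Submodule ℝ J, I ≤ A.peirce c 1 →
      (∀ x ∈ A.peirce c 1, ∀ a ∈ I, A.mul x a ∈ I) →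
      I = ⊥ ∨ I = A.peirce c 1 := by
  have hcmem : c ∈ A.peirce c 1 := A.mem_peirce.mpr (by rw [hc, one_smul])
  refine ⟨⟨c, hcmem, hc0⟩, ?_⟩
  intro I hIJ1 hIdl
  classical
  set e : J := (I.orthogonalProjectionOnto c : J) with hedef
  have heI : e ∈ I := Submodule.coe_mem _
  set f : J := c - e with hfdef
  have hfperp : f ∈ Iᗮ := Submodule.sub_starProjection_mem_orthogonal (K := I) c
  have hefc : e + f = c := by rw [hfdef]; abel
  have horth : ∀ v, v ∈ I → v ∈ Iᗮ → v = 0 := fun v hv hv' =>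
    inner_self_eq_zero.mp ((Submodule.mem_orthogonal I v).mp hv' v hv)
  have hJ1c : ∀ x ∈ A.peirce c 1, A.mul c x = x := fun x hx => by
    have := A.mem_peirce.mp hx; rwa [one_smul] at this
  have heJ1 : e ∈ A.peirce c 1 := hIJ1 heI
  have hfJ1 : f ∈ A.peirce c 1 := Submodule.sub_mem _ hcmem heJ1
  have hfI : ∀ a ∈ I, A.mul f a = 0 := by
    intro a ha
    refine horth _ (hIdl f hfJ1 a ha) ?_
    rw [Submodule.mem_orthogonal]
    intro u hu
    calc ⟪u, A.mul f a⟫ = ⟪A.mul a f, u⟫ := by rw [real_inner_comm, A.comm f a]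
    _ = ⟪f, A.mul a u⟫ := A.assoc_inner a f u
    _ = ⟪A.mul a u, f⟫ := real_inner_comm _ _
    _ = 0 := (Submodule.mem_orthogonal I f).mp hfperp _ (hIdl a (hIJ1 ha) u hu)
  have hea : ∀ a ∈ I, A.mul e a = a := by
    intro a ha
    have h1 : A.mul c a = a := hJ1c a (hIJ1 ha)
    rw [← hefc, map_add, LinearMap.add_apply, hfI a ha, add_zero] at h1
    exact h1
  have hee : A.mul e e = e := hea e heI
  by_cases he0 : e = 0
  · left
    rw [Submodule.eq_bot_iff]
    intro a ha
    have h1 := hea a ha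
    rw [he0] at h1
    simpa using h1.symm
  · have hfe : A.mul f e = 0 := hfI e heI
    have hef : A.mul e f = 0 := by rw [A.comm]; exact hfe
    have hff : A.mul f f = f := by
      have h1 : A.mul c f = f := hJ1c f hfJ1
      rw [← hefc, map_add, LinearMap.add_apply, hef, zero_add] at h1
      exact h1
    by_cases hf0 : f = 0
    · right
      have hcI : c ∈ I := by rw [← hefc, hf0, add_zero]; exact heI
      refine le_antisymm hIJ1 ?_
      intro x hx
      have h1 : A.mul x c ∈ I := hIdl x hx c hcI
      rwa [A.comm x c, hJ1c x hx] at h1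
    · exfalso
      -- `f` kills the half eigenspace of `e`
      have hkill : ∀ z, A.mul e z = (1/2:ℝ) • z → A.mul f z = 0 := by
        intro z hz
        have hcm : ∀ w, A.mul e (A.mul f w) = A.mul f (A.mul e w) :=
          fun w => A.comm0 hee hef w
        have hez1 : A.mul e (A.mul f z) = (1/2:ℝ) • A.mul f z := by
          rw [hcm, hz, map_smul]
        have hez2 : A.mul e (A.mul f (A.mul f z)) = (1/2:ℝ) • A.mul f (A.mul f z) := by
          rw [hcm, hez1, map_smul]
        set v1 : J := (2:ℝ) • A.mul f (A.mul f z) - A.mul f z with hv1def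
        set vh : J := (4:ℝ) • A.mul f z - (4:ℝ) • A.mul f (A.mul f z) with hvhdef
        have hfv1 : A.mul f v1 = v1 := by
          rw [hv1def]
          have h := A.cubic hff z
          simp only [map_smul, map_sub]
          linear_combination (norm := module) h
        have hev1 : A.mul e v1 = (1/2:ℝ) • v1 := by
          rw [hv1def, map_sub, map_smul, hez2, hez1]; module
        have hcv1 : A.mul c v1 = (3/2:ℝ) • v1 := by
          rw [← hefc, map_add, LinearMap.add_apply, hev1, hfv1]; module
        have hv1 : v1 = 0 := by
          have h := A.cubic hc v1
          simp only [hcv1, map_smul, smul_smul] at h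
          have h2 : (3/2:ℝ) • v1 = 0 := by linear_combination (norm := module) h
          have := smul_eq_zero.mp h2
          simpa using this
        have hfvh : A.mul f vh = (1/2:ℝ) • vh := by
          rw [hvhdef]
          have h := A.cubic hff z
          simp only [map_smul, map_sub]
          linear_combination (norm := module) (-2:ℝ) • h
        have hevh : A.mul e vh = (1/2:ℝ) • vh := by
          rw [hvhdef, map_sub, map_smul, map_smul, hez1, hez2]; module
        have hcvh : A.mul c vh = vh := by
          rw [← hefc, map_add, LinearMap.add_apply, hevh, hfvh]; module
        have hvhJ1 : vh ∈ A.peirce c 1 := A.mem_peirce.mpr (by rw [hcvh, one_smul])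
        have hvh2 : vh = (2:ℝ) • A.mul vh e := by
          rw [A.comm vh e, hevh]; module
        have hvhI : vh ∈ I := by
          rw [hvh2]
          exact Submodule.smul_mem _ _ (hIdl vh hvhJ1 e heI)
        have hvhperp : vh ∈ Iᗮ := by
          rw [Submodule.mem_orthogonal]
          intro u hu
          have h3 : vh = (2:ℝ) • A.mul vh f := by rw [A.comm vh f, hfvh]; module
          have hz0 : ⟪u, A.mul vh f⟫ = 0 := by
            calc ⟪u, A.mul vh f⟫ = ⟪A.mul vh f, u⟫ := real_inner_comm _ _
            _ = ⟪f, A.mul vh u⟫ := A.assoc_inner vh f u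
            _ = ⟪A.mul vh u, f⟫ := real_inner_comm _ _
            _ = 0 := (Submodule.mem_orthogonal I f).mp hfperp _ (hIdl vh hvhJ1 u hu)
          rw [h3, real_inner_smul_right, hz0, mul_zero]
        have hvh0 : vh = 0 := horth _ hvhI hvhperp
        have hfin : A.mul f z = v1 + (1/2:ℝ) • vh := by rw [hv1def, hvhdef]; module
        rw [hfin, hv1, hvh0]
        simp
      -- the ideal generated by `e`
      set S : Set J :=
        {z | ∃ a ∈ A.peirce e (1/2:ℝ), ∃ b ∈ A.peirce e (1/2:ℝ), z = A.mul a b}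
        with hSdef
      set K : Submodule ℝ J :=
        A.peirce e 1 ⊔ A.peirce e (1/2:ℝ) ⊔ Submodule.span ℝ S with hKdef
      have me1K : ∀ {y : J}, y ∈ A.peirce e 1 → y ∈ K :=
        fun h => Submodule.mem_sup_left (Submodule.mem_sup_left h)
      have mehK : ∀ {y : J}, y ∈ A.peirce e (1/2:ℝ) → y ∈ K :=
        fun h => Submodule.mem_sup_left (Submodule.mem_sup_right h)
      have mesK : ∀ {y : J}, y ∈ Submodule.span ℝ S → y ∈ K :=
        fun h => Submodule.mem_sup_right h
      have hm1 : ∀ {y : J}, A.mul e y = y → y ∈ A.peirce e 1 :=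
        fun h => A.mem_peirce.mpr (by rw [h, one_smul])
      have hKideal : A.IsIdeal K := by
        intro x k hk
        obtain ⟨x1, xh, x0, hx1, hxh, hx0, hsum⟩ :
            ∃ x1 xh x0 : J, A.mul e x1 = x1 ∧ A.mul e xh = (1/2:ℝ) • xh ∧
              A.mul e x0 = 0 ∧ x1 + xh + x0 = x :=
          ⟨_, _, _, A.part1 hee x, A.parth hee x, A.part0 hee x, A.decomp_sum e x⟩
        have hxsplit : ∀ y : J, A.mul x y = A.mul x1 y + A.mul xh y + A.mul x0 y := by
          intro y
          rw [← hsum, map_add, map_add, LinearMap.add_apply, LinearMap.add_apply]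
        have main : K ≤ Submodule.comap (A.mul x) K := by
          refine sup_le (sup_le ?g1 ?gh) (Submodule.span_le.mpr ?gs)
          · intro b hb
            have hb1 : A.mul e b = b := by
              have := A.mem_peirce.mp hb; rwa [one_smul] at this
            show A.mul x b ∈ K
            rw [hxsplit b]
            refine Submodule.add_mem _ (Submodule.add_mem _ ?_ ?_) ?_
            · exact me1K (hm1 (A.p11 hee hx1 hb1))
            · refine mehK (A.mem_peirce.mpr ?_)
              have h := A.p1h hee hb1 hxh
              rwa [A.comm b xh] at h
            · have h := A.p10 hee hb1 hx0
              rw [A.comm x0 b, h]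
              exact Submodule.zero_mem _
          · intro b hb
            have hbh : A.mul e b = (1/2:ℝ) • b := A.mem_peirce.mp hb
            show A.mul x b ∈ K
            rw [hxsplit b]
            refine Submodule.add_mem _ (Submodule.add_mem _ ?_ ?_) ?_
            · exact mehK (A.mem_peirce.mpr (A.p1h hee hx1 hbh))
            · exact mesK (Submodule.subset_span
                ⟨xh, A.mem_peirce.mpr hxh, b, hb, rfl⟩)
            · exact mehK (A.mem_peirce.mpr (A.p0h hee hx0 hbh))
          · rintro z ⟨a, haEh, b, hbEh, rfl⟩
            have ha : A.mul e a = (1/2:ℝ) • a := A.mem_peirce.mp haEh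
            have hb : A.mul e b = (1/2:ℝ) • b := A.mem_peirce.mp hbEh
            have hu1 : A.mul e (A.mul e (A.mul a b)) = A.mul e (A.mul a b) :=
              A.phh hee ha hb
            have hu0 : A.mul e (A.mul a b - A.mul e (A.mul a b)) = 0 := by
              rw [map_sub, hu1, sub_self]
            show A.mul x (A.mul a b) ∈ K
            rw [hxsplit (A.mul a b)]
            refine Submodule.add_mem _ (Submodule.add_mem _ ?_ ?_) ?_
            · -- x1 component
              have hsplit : A.mul x1 (A.mul a b)
                  = A.mul x1 (A.mul e (A.mul a b))
                    + A.mul x1 (A.mul a b - A.mul e (A.mul a b)) := by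
                rw [← map_add]; congr 1; module
              rw [hsplit, A.p10 hee hx1 hu0, add_zero]
              exact me1K (hm1 (A.p11 hee hx1 hu1))
            · -- xh component
              have hsplit : A.mul xh (A.mul a b)
                  = A.mul xh (A.mul e (A.mul a b))
                    + A.mul xh (A.mul a b - A.mul e (A.mul a b)) := by
                rw [← map_add]; congr 1; module
              rw [hsplit]
              refine Submodule.add_mem _ (mehK (A.mem_peirce.mpr ?_))
                (mehK (A.mem_peirce.mpr ?_))
              · have h := A.p1h hee hu1 hxh
                rwa [A.comm (A.mul e (A.mul a b)) xh] at h
              · have h := A.p0h hee hu0 hxh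
                rwa [A.comm (A.mul a b - A.mul e (A.mul a b)) xh] at h
            · -- x0 component
              rw [A.m7 hee hx0 ha hb]
              have t1 : A.mul a (A.mul x0 b) ∈ Submodule.span ℝ S :=
                Submodule.subset_span
                  ⟨a, haEh, A.mul x0 b, A.mem_peirce.mpr (A.p0h hee hx0 hb), rfl⟩
              have t2 : A.mul (A.mul x0 a) b ∈ Submodule.span ℝ S :=
                Submodule.subset_span
                  ⟨A.mul x0 a, A.mem_peirce.mpr (A.p0h hee hx0 ha), b, hbEh, rfl⟩
              have t3 : A.mul e (A.mul (A.mul x0 a) b) ∈ A.peirce e 1 := by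
                refine hm1 ?_
                exact A.phh hee (by
                  have := A.p0h hee hx0 ha
                  exact this) hb
              exact Submodule.sub_mem _
                (Submodule.add_mem _ (mesK t1) (mesK t2))
                (Submodule.smul_mem _ _ (me1K t3))
        exact main hk
      have heK : e ∈ K := me1K (hm1 hee)
      have hKtop : K = ⊤ := by
        rcases hA.2 K hKideal with h | h
        · rw [h, Submodule.mem_bot] at heK
          exact absurd heK he0
        · exact h
      have hfK : f ∈ K := by rw [hKtop]; exact Submodule.mem_top
      -- f is orthogonal to everything in K
      have hperp : K ≤ LinearMap.ker (innerₛₗ ℝ f) := by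
        refine sup_le (sup_le ?o1 ?oh) (Submodule.span_le.mpr ?os)
        · intro k hk
          have hk1 : A.mul e k = k := by
            have := A.mem_peirce.mp hk; rwa [one_smul] at this
          rw [LinearMap.mem_ker, innerₛₗ_apply_apply]
          calc ⟪f, k⟫ = ⟪f, A.mul e k⟫ := by rw [hk1]
          _ = ⟪A.mul e f, k⟫ := (A.assoc_inner e f k).symm
          _ = 0 := by rw [hef, inner_zero_left]
        · intro k hk
          have hkh : A.mul e k = (1/2:ℝ) • k := A.mem_peirce.mp hk
          rw [LinearMap.mem_ker, innerₛₗ_apply_apply]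
          have h1 : ⟪A.mul e f, k⟫ = ⟪f, A.mul e k⟫ := A.assoc_inner e f k
          rw [hef, hkh, inner_zero_left, real_inner_smul_right] at h1
          linarith
        · rintro z ⟨a, haEh, b, hbEh, rfl⟩
          have ha : A.mul e a = (1/2:ℝ) • a := A.mem_peirce.mp haEh
          rw [SetLike.mem_coe, LinearMap.mem_ker, innerₛₗ_apply_apply]
          calc ⟪f, A.mul a b⟫ = ⟪A.mul a f, b⟫ := (A.assoc_inner a f b).symm
          _ = 0 := by rw [A.comm a f, hkill a ha, inner_zero_left]
      have : ⟪f, f⟫ = 0 := by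
        have := hperp hfK
        rwa [LinearMap.mem_ker, innerₛₗ_apply_apply] at this
      exact hf0 (inner_self_eq_zero.mp this)
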